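/- arXiv:1111.3449 — 2 statements merged into one kernel-verified Lean document; each statement's English description precedes it below -/
import Mathlib

section
/- Composition of partial unfoldings is a partial unfolding: if C is a partial unfolding of B with index sets E_1,...,E_n and D is a partial unfolding of C with index sets F_1,...,F_m (m = Σ|E_i|), then D is a partial unfolding of B with index sets G_i = ⋃_{ĵ ∈ E_i} F_ĵ, where the composite mutations satisfy μ̂̂_i = ∏_{ĵ∈E_i} μ̂_ĵ. -/
/-- Matrix mutation in direction `k` for an integer matrix. -/
def mutate {m : ℕ} (C : Matrix (Fin m) (Fin m) ℤ) (k : Fin m) : Matrix (Fin m) (Fin m) ℤ :=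
  fun i j => if i = k ∨ j = k then -C i j
    else C i j + (|C i k| * C k j + C i k * |C k j|) / 2

/-- Composite mutation of `C` in direction `k`: the product of the mutations `μ_r` over all
indices `r` in the block `E_k = π⁻¹(k)`. -/
def compMut {m n : ℕ} (π : Fin m → Fin n) (C : Matrix (Fin m) (Fin m) ℤ) (k : Fin n) :
    Matrix (Fin m) (Fin m) ℤ :=
  ((Finset.univ.filter (fun a => π a = k)).sort (· ≤ ·)).foldl mutate C

/-- `C` (with blocks `E_i = π⁻¹(i)`) is a partial unfolding of `B` if, after any sequence of
mutations of `B` matched with the corresponding composite mutations of `C`, (1) every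
column sum of each `E_i × E_j` block of `C` equals `b_ij`, and (2) whenever `b_ij ≥ 0` the
`E_i × E_j` block of `C` is entrywise nonnegative. -/
def IsPartialUnfolding {m n : ℕ} (π : Fin m → Fin n)
    (B : Matrix (Fin n) (Fin n) ℤ) (C : Matrix (Fin m) (Fin m) ℤ) : Prop :=
  ∀ seq : List (Fin n),
    (∀ (i : Fin n) (b : Fin m),
      ∑ a ∈ Finset.univ.filter (fun a => π a = i), (seq.foldl (compMut π) C) a b
        = (seq.foldl mutate B) i (π b)) ∧
    (∀ a b : Fin m, 0 ≤ (seq.foldl mutate B) (π a) (π b) →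
      0 ≤ (seq.foldl (compMut π) C) a b)

/- ------------------- auxiliary lemmas ------------------- -/

lemma tdvd (a b : ℤ) : (2:ℤ) ∣ (|a| * b + a * |b|) := by
  rcases abs_cases a with ⟨h,_⟩|⟨h,_⟩ <;> rcases abs_cases b with ⟨h',_⟩|⟨h',_⟩ <;>
    rw [h, h'] <;> ring_nf <;> omega

lemma two_mul_half (a b : ℤ) : 2 * ((|a| * b + a * |b|) / 2) = |a| * b + a * |b| :=
  Int.mul_ediv_cancel' (tdvd a b)

lemma abs_eq_of_skew {x y u v : ℤ} (hu : 0 < u) (hv : 0 < v) (h : x * u = -(y * v)) :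
    |x| * u = |y| * v := by
  have := congrArg abs h
  rwa [abs_neg, abs_mul, abs_mul, abs_of_pos hu, abs_of_pos hv] at this

lemma mutate_skew {n : ℕ} {B : Matrix (Fin n) (Fin n) ℤ} {D : Fin n → ℤ} (hD : ∀ i, 0 < D i)
    (hskew : ∀ i j, B i j * D j = -(B j i * D i)) (k : Fin n) :
    ∀ i j, mutate B k i j * D j = -(mutate B k j i * D i) := by
  intro i j
  simp only [mutate]
  by_cases h : i = k ∨ j = k
  · rw [if_pos h, if_pos h.symm]
    have := hskew i j; ring_nf; linarith
  · rw [if_neg h, if_neg fun hc => h hc.symm]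
    have key : (|B i k| * B k j + B i k * |B k j|) * D j
        = -((|B j k| * B k i + B j k * |B k i|) * D i) := by
      have hDk := (hD k).ne'
      apply mul_right_cancel₀ hDk
      have h1 : |B i k| * D k = |B k i| * D i := abs_eq_of_skew (hD k) (hD i) (hskew i k)
      have h2 : |B k j| * D j = |B j k| * D k := abs_eq_of_skew (hD j) (hD k) (hskew k j)
      have h3 : B i k * D k = -(B k i * D i) := hskew i k
      have h4 : B k j * D j = -(B j k * D k) := hskew k j
      linear_combination (B k j * D j) * h1 + (B i k * D k) * h2 + (|B k i| * D i) * h4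
        + (|B j k| * D k) * h3
    have e1 := two_mul_half (B i k) (B k j)
    have e2 := two_mul_half (B j k) (B k i)
    have hij := hskew i j
    have goal2 : 2 * ((B i j + (|B i k| * B k j + B i k * |B k j|) / 2) * D j)
        = 2 * (-((B j i + (|B j k| * B k i + B j k * |B k i|) / 2) * D i)) := by
      linear_combination 2 * hij + D j * e1 + D i * e2 + key
    linarith [goal2]

lemma foldl_mutate_skew {n : ℕ} {D : Fin n → ℤ} (hD : ∀ i, 0 < D i) :
    ∀ (seq : List (Fin n)) (B : Matrix (Fin n) (Fin n) ℤ),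
    (∀ i j, B i j * D j = -(B j i * D i)) →
    ∀ i j, (seq.foldl mutate B) i j * D j = -((seq.foldl mutate B) j i * D i) := by
  intro seq
  induction seq with
  | nil => intro B hB; exact hB
  | cons k seq ih => intro B hB; exact ih _ (mutate_skew hD hB k)

lemma foldl_mutate_diag {n : ℕ} {D : Fin n → ℤ} (hD : ∀ i, 0 < D i)
    {B : Matrix (Fin n) (Fin n) ℤ} (hB : ∀ i j, B i j * D j = -(B j i * D i))
    (seq : List (Fin n)) (i : Fin n) : (seq.foldl mutate B) i i = 0 := by
  have h := foldl_mutate_skew hD seq B hB i i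
  have hDi := (hD i).ne'
  have : (seq.foldl mutate B) i i * D i = 0 := by linarith
  exact (mul_eq_zero.1 this).resolve_right hDi

lemma mutate_zero_block {p : ℕ} {S : Set (Fin p)} {M : Matrix (Fin p) (Fin p) ℤ}
    (h : ∀ a ∈ S, ∀ b ∈ S, M a b = 0) {k : Fin p} (hk : k ∈ S) :
    ∀ a ∈ S, ∀ b ∈ S, mutate M k a b = 0 := by
  intro a ha b hb
  simp only [mutate]
  by_cases hc : a = k ∨ b = k
  · rw [if_pos hc, h a ha b hb, neg_zero]
  · rw [if_neg hc, h a ha b hb, h a ha k hk, h k hk b hb]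
    simp

lemma mutate_comm {p : ℕ} {M : Matrix (Fin p) (Fin p) ℤ} {r s : Fin p}
    (hrs : M r s = 0) (hsr : M s r = 0) :
    mutate (mutate M r) s = mutate (mutate M s) r := by
  rcases eq_or_ne r s with h | hne
  · subst h; rfl
  have hne' : ¬ s = r := fun h => hne h.symm
  funext i j
  simp only [mutate]
  by_cases hir : i = r <;> by_cases his : i = s <;> by_cases hjr : j = r <;>
    by_cases hjs : j = s <;> simp_all <;> ring

lemma foldl_mutate_perm {p : ℕ} (S : Set (Fin p)) :
    ∀ {l₁ l₂ : List (Fin p)}, l₁.Perm l₂ → (∀ x ∈ l₁, x ∈ S) →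
    ∀ M : Matrix (Fin p) (Fin p) ℤ, (∀ a ∈ S, ∀ b ∈ S, M a b = 0) →
    l₁.foldl mutate M = l₂.foldl mutate M := by
  intro l₁ l₂ hp
  induction hp with
  | nil => intro _ M _; rfl
  | cons x hp ih =>
      intro hmem M hM
      simp only [List.foldl_cons]
      exact ih (fun y hy => hmem y (List.mem_cons_of_mem _ hy)) _
        (mutate_zero_block hM (hmem x List.mem_cons_self))
  | swap x y l =>
      intro hmem M hM
      have hx : x ∈ S := hmem x (by simp)
      have hy : y ∈ S := hmem y (by simp)
      simp only [List.foldl_cons]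
      rw [mutate_comm (hM y hy x hx) (hM x hx y hy)]
  | trans h₁ h₂ ih₁ ih₂ =>
      intro hmem M hM
      exact (ih₁ hmem M hM).trans (ih₂ (fun y hy => hmem y (h₁.mem_iff.mpr hy)) M hM)

lemma foldl_flatMap' {α β γ : Type*} (g : β → α → β) :
    ∀ (l : List γ) (f : γ → List α) (b : β),
    (l.flatMap f).foldl g b = l.foldl (fun x a => (f a).foldl g x) b := by
  intro l
  induction l with
  | nil => intro f b; rfl
  | cons a l ih =>
      intro f b
      rw [List.flatMap_cons, List.foldl_append, List.foldl_cons, ih]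

lemma compMut_comp_eq {n m p : ℕ} (π : Fin m → Fin n) (ρ : Fin p → Fin m)
    (M : Matrix (Fin p) (Fin p) ℤ) (i : Fin n)
    (hM : ∀ a b : Fin p, π (ρ a) = i → π (ρ b) = i → M a b = 0) :
    compMut (π ∘ ρ) M i =
      ((Finset.univ.filter (fun a => π a = i)).sort (· ≤ ·)).foldl (compMut ρ) M := by
  have hR : ((Finset.univ.filter (fun a => π a = i)).sort (· ≤ ·)).foldl (compMut ρ) M
      = (((Finset.univ.filter (fun a => π a = i)).sort (· ≤ ·)).flatMap
          (fun j => (Finset.univ.filter (fun a => ρ a = j)).sort (· ≤ ·))).foldl mutate M := by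
    rw [foldl_flatMap']; rfl
  rw [hR]
  unfold compMut
  have hperm : ((Finset.univ.filter (fun a => (π ∘ ρ) a = i)).sort (· ≤ ·)).Perm
      (((Finset.univ.filter (fun a => π a = i)).sort (· ≤ ·)).flatMap
        (fun j => (Finset.univ.filter (fun a => ρ a = j)).sort (· ≤ ·))) := by
    apply List.perm_of_nodup_nodup_toFinset_eq (Finset.sort_nodup _ _)
    · rw [List.nodup_flatMap]
      refine ⟨fun _ _ => Finset.sort_nodup _ _, ?_⟩
      refine List.Pairwise.imp ?_ ((Finset.sort_nodup _ _) : _)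
      intro a b hab x hx hx'
      rw [Finset.mem_sort, Finset.mem_filter] at hx hx'
      exact hab (hx.2.symm.trans hx'.2)
    · ext a
      simp only [List.mem_toFinset, List.mem_flatMap, Finset.mem_sort, Finset.mem_filter,
        Finset.mem_univ, true_and, Function.comp]
      constructor
      · intro h; exact ⟨ρ a, h, rfl⟩
      · rintro ⟨j, hj, rfl⟩; exact hj
  refine foldl_mutate_perm {a : Fin p | π (ρ a) = i} hperm ?_ M
    (fun a ha b hb => hM a b ha hb)
  intro x hx
  rw [Finset.mem_sort, Finset.mem_filter] at hx
  exact hx.2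

/-- The expansion of a mutation sequence for `B` into the corresponding sequence for `C`. -/
def expandSeq {m n : ℕ} (π : Fin m → Fin n) (seq : List (Fin n)) : List (Fin m) :=
  seq.flatMap (fun i => (Finset.univ.filter (fun a => π a = i)).sort (· ≤ ·))

lemma foldl_compMut_eq {m n : ℕ} (π : Fin m → Fin n) (C : Matrix (Fin m) (Fin m) ℤ)
    (seq : List (Fin n)) :
    seq.foldl (compMut π) C = (expandSeq π seq).foldl mutate C :=
  (foldl_flatMap' mutate seq _ C).symm

/-- Composition of partial unfoldings is a partial unfolding (Lemma 10.3): if `C` is a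
partial unfolding of the skew-symmetrizable matrix `B` with blocks `E_i = π⁻¹(i)`, and
`E` is a partial unfolding of `C` with blocks `F_ĵ = ρ⁻¹(ĵ)`, then `E` is a partial
unfolding of `B` with blocks `G_i = (π ∘ ρ)⁻¹(i) = ⋃_{ĵ ∈ E_i} F_ĵ`, and the composite
mutations compose: `μ̂̂_i = ∏_{ĵ ∈ E_i} μ̂_ĵ`. -/
theorem partial_unfolding_comp {n m p : ℕ}
    (B : Matrix (Fin n) (Fin n) ℤ) (C : Matrix (Fin m) (Fin m) ℤ)
    (E : Matrix (Fin p) (Fin p) ℤ)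
    (π : Fin m → Fin n) (ρ : Fin p → Fin m)
    (D : Fin n → ℤ) (hD : ∀ i, 0 < D i)
    (hskew : ∀ i j, B i j * D j = -(B j i * D i))
    (h₁ : IsPartialUnfolding π B C) (h₂ : IsPartialUnfolding ρ C E) :
    IsPartialUnfolding (π ∘ ρ) B E ∧
      ∀ i : Fin n,
        compMut (π ∘ ρ) E i =
          ((Finset.univ.filter (fun a => π a = i)).sort (· ≤ ·)).foldl (compMut ρ) E := by
  classical
  have hBdiag : ∀ (seq : List (Fin n)) (i : Fin n), (seq.foldl mutate B) i i = 0 :=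
    fun seq i => foldl_mutate_diag hD hskew seq i
  -- Step 1: the mutated `C` vanishes on diagonal blocks.
  have hC0 : ∀ (seq : List (Fin n)) (j k : Fin m), π j = π k →
      (seq.foldl (compMut π) C) j k = 0 := by
    intro seq j k hjk
    have h1 := (h₁ seq).1 (π k) k
    rw [hBdiag] at h1
    have hnn : ∀ a ∈ Finset.univ.filter (fun a => π a = π k),
        0 ≤ (seq.foldl (compMut π) C) a k := by
      intro a ha
      rw [Finset.mem_filter] at ha
      apply (h₁ seq).2
      rw [ha.2, hBdiag]
    exact (Finset.sum_eq_zero_iff_of_nonneg hnn).1 h1 j (by simp [hjk])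
  -- Step 2: the mutated `E` vanishes on diagonal blocks.
  have hE0 : ∀ (seq : List (Fin n)) (a b : Fin p), π (ρ a) = π (ρ b) →
      ((expandSeq π seq).foldl (compMut ρ) E) a b = 0 := by
    intro seq a b hab
    have h1 := (h₂ (expandSeq π seq)).1 (ρ a) b
    rw [← foldl_compMut_eq, hC0 seq _ _ hab] at h1
    have hnn : ∀ x ∈ Finset.univ.filter (fun x => ρ x = ρ a),
        0 ≤ ((expandSeq π seq).foldl (compMut ρ) E) x b := by
      intro x hx
      rw [Finset.mem_filter] at hx
      apply (h₂ (expandSeq π seq)).2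
      rw [← foldl_compMut_eq, hC0 seq _ _ (by rw [hx.2]; exact hab)]
    exact (Finset.sum_eq_zero_iff_of_nonneg hnn).1 h1 a (by simp)
  -- Step 3: the composite mutations factor through `expandSeq`.
  have F : ∀ seq : List (Fin n),
      seq.foldl (compMut (π ∘ ρ)) E = (expandSeq π seq).foldl (compMut ρ) E := by
    intro seq
    induction seq using List.reverseRecOn with
    | nil => rfl
    | append_singleton s i ih =>
        rw [List.foldl_append, List.foldl_cons, List.foldl_nil, ih,
          compMut_comp_eq π ρ _ i (fun a b ha hb => hE0 s a b (ha.trans hb.symm))]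
        have hex : expandSeq π (s ++ [i])
            = expandSeq π s ++ (Finset.univ.filter (fun a => π a = i)).sort (· ≤ ·) := by
          simp [expandSeq]
        rw [hex, List.foldl_append]
  refine ⟨?_, ?_⟩
  · intro seq
    constructor
    · intro i b
      rw [F seq]
      have hpart : Finset.univ.filter (fun a => (π ∘ ρ) a = i)
          = (Finset.univ.filter (fun a => π a = i)).biUnion
              (fun j => Finset.univ.filter (fun a => ρ a = j)) := by
        ext a
        simp only [Finset.mem_filter, Finset.mem_univ, true_and, Finset.mem_biUnion,
          Function.comp]
        constructor
        · intro h; exact ⟨ρ a, h, rfl⟩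
        · rintro ⟨j, hj, rfl⟩; exact hj
      have hdisj : ∀ x ∈ Finset.univ.filter (fun a => π a = i),
          ∀ y ∈ Finset.univ.filter (fun a => π a = i), x ≠ y →
          Disjoint (Finset.univ.filter (fun a => ρ a = x))
            (Finset.univ.filter (fun a => ρ a = y)) := by
        intro x _ y _ hxy
        rw [Finset.disjoint_left]
        intro a ha ha'
        rw [Finset.mem_filter] at ha ha'
        exact hxy (ha.2.symm.trans ha'.2)
      rw [hpart, Finset.sum_biUnion hdisj]
      have hsum : ∀ j ∈ Finset.univ.filter (fun a => π a = i),
          ∑ a ∈ Finset.univ.filter (fun a => ρ a = j),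
            ((expandSeq π seq).foldl (compMut ρ) E) a b
          = (seq.foldl (compMut π) C) j (ρ b) := by
        intro j _
        rw [foldl_compMut_eq π C seq]
        exact (h₂ (expandSeq π seq)).1 j b
      rw [Finset.sum_congr rfl hsum]
      exact (h₁ seq).1 i (ρ b)
    · intro a b hab
      rw [F seq]
      apply (h₂ (expandSeq π seq)).2
      rw [← foldl_compMut_eq]
      exact (h₁ seq).2 (ρ a) (ρ b) hab
  · intro i
    exact compMut_comp_eq π ρ E i (fun a b ha hb => hE0 [] a b (ha.trans hb.symm))
end

section
/- Column-sum condition is preserved under sign-coherent composite mutation (one-step case): let B be an n×n skew-symmetrizable matrix and C an m×m matrix with index blocks E_1,...,E_n satisfying: each E_i×E_i block of C is zero; every column sum of the E_i×E_j block equals b_ij; and each E_i×E_j block has all entries of the same sign as b_ij (nonnegative if b_ij ≥ 0, nonpositive if b_ij ≤ 0). Then for any k, the matrix C' = μ̂_k(C) (composite mutation over E_k) has the property that every column sum of its E_i×E_j block equals b'_ij, where B' = μ_k(B). -/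
lemma sum_sort {α β : Type*} [LinearOrder α] [AddCommMonoid β] (s : Finset α) (f : α → β) :
    ((s.sort (· ≤ ·)).map f).sum = ∑ x ∈ s, f x := by
  rw [Finset.sum, ← Finset.sort_eq s (· ≤ ·), Multiset.map_coe, Multiset.sum_coe]

lemma foldl_mutate_formula {m n : ℕ} (π : Fin m → Fin n) (k : Fin n) :
    ∀ (L : List (Fin m)), L.Nodup → (∀ r ∈ L, π r = k) →
    ∀ (C : Matrix (Fin m) (Fin m) ℤ), (∀ a b, π a = k → π b = k → C a b = 0) →
    ∀ a b,
    (L.foldl mutate C) a b =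
      if π a = k then (if π b = k then 0 else if a ∈ L then -C a b else C a b)
      else if π b = k then (if b ∈ L then -C a b else C a b)
      else C a b + (L.map (fun r => (|C a r| * C r b + C a r * |C r b|) / 2)).sum := by
  intro L
  induction L with
  | nil =>
    intro _ _ C hC0 a b
    by_cases ha : π a = k <;> by_cases hb : π b = k <;> simp [ha, hb, hC0 a b]
  | cons r L' ih =>
    intro hnd hLk C hC0 a b
    have hr : π r = k := hLk r List.mem_cons_self
    have hnd' : L'.Nodup := (List.nodup_cons.mp hnd).2
    have hrL' : r ∉ L' := (List.nodup_cons.mp hnd).1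
    have hLk' : ∀ s ∈ L', π s = k := fun s hs => hLk s (List.mem_cons_of_mem r hs)
    have hC0' : ∀ a b, π a = k → π b = k → (mutate C r) a b = 0 := by
      intro a b ha hb
      simp only [mutate]
      by_cases h : a = r ∨ b = r
      · simp [h, hC0 a b ha hb]
      · simp [h, hC0 a b ha hb, hC0 a r ha hr]
    rw [List.foldl_cons, ih hnd' hLk' (mutate C r) hC0' a b]
    by_cases ha : π a = k
    · by_cases hb : π b = k
      · simp [ha, hb]
      · simp only [ha, hb, if_true, if_false]
        by_cases har : a = r
        · subst har
          have : a ∉ L' := hrL'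
          simp only [this, if_false, List.mem_cons, true_or, if_true]
          simp [mutate]
        · have ham : a ∈ r :: L' ↔ a ∈ L' := by simp [har]
          have hCab : (mutate C r) a b = C a b := by
            have hbr : b ≠ r := fun h => hb (h ▸ hr)
            simp [mutate, har, hbr, hC0 a r ha hr]
          rw [hCab]
          by_cases haL : a ∈ L' <;> simp [haL, ham, har]
    · by_cases hb : π b = k
      · simp only [ha, hb, if_false, if_true]
        by_cases hbr : b = r
        · subst hbr
          have : b ∉ L' := hrL'
          simp only [this, if_false, List.mem_cons, true_or, if_true]
          simp [mutate]
        · have hbm : b ∈ r :: L' ↔ b ∈ L' := by simp [hbr]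
          have hCab : (mutate C r) a b = C a b := by
            have har : a ≠ r := fun h => ha (h ▸ hr)
            simp [mutate, har, hbr, hC0 r b hr hb]
          rw [hCab]
          by_cases hbL : b ∈ L' <;> simp [hbL, hbm, hbr]
      · have har : a ≠ r := fun h => ha (h ▸ hr)
        have hbr : b ≠ r := fun h => hb (h ▸ hr)
        simp only [ha, hb, if_false]
        have hCab : (mutate C r) a b
            = C a b + (|C a r| * C r b + C a r * |C r b|) / 2 := by
          simp [mutate, har, hbr]
        have hmap : L'.map (fun s => (|(mutate C r) a s| * (mutate C r) s b
              + (mutate C r) a s * |(mutate C r) s b|) / 2)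
            = L'.map (fun s => (|C a s| * C s b + C a s * |C s b|) / 2) := by
          apply List.map_congr_left
          intro s hs
          have hsr : s ≠ r := fun h => hrL' (h ▸ hs)
          have hsk : π s = k := hLk' s hs
          have h1 : (mutate C r) a s = C a s := by
            simp [mutate, har, hsr, hC0 r s hr hsk]
          have h2 : (mutate C r) s b = C s b := by
            simp [mutate, hsr, hbr, hC0 s r hsk hr]
          rw [h1, h2]
        rw [hCab, hmap, List.map_cons, List.sum_cons]
        ring

lemma half_pp (x y : ℤ) (hx : 0 ≤ x) (hy : 0 ≤ y) : (|x| * y + x * |y|) / 2 = x * y := by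
  rw [abs_of_nonneg hx, abs_of_nonneg hy, ← two_mul (x * y),
    Int.mul_ediv_cancel_left _ two_ne_zero]

lemma half_pn (x y : ℤ) (hx : 0 ≤ x) (hy : y ≤ 0) : (|x| * y + x * |y|) / 2 = 0 := by
  rw [abs_of_nonneg hx, abs_of_nonpos hy]
  have h : x * y + x * -y = 0 := by ring
  rw [h]; rfl

lemma half_np (x y : ℤ) (hx : x ≤ 0) (hy : 0 ≤ y) : (|x| * y + x * |y|) / 2 = 0 := by
  rw [abs_of_nonpos hx, abs_of_nonneg hy]
  have h : -x * y + x * y = 0 := by ring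
  rw [h]; rfl

lemma half_nn (x y : ℤ) (hx : x ≤ 0) (hy : y ≤ 0) : (|x| * y + x * |y|) / 2 = -(x * y) := by
  rw [abs_of_nonpos hx, abs_of_nonpos hy]
  have h : -x * y + x * -y = 2 * -(x * y) := by ring
  rw [h, Int.mul_ediv_cancel_left _ two_ne_zero]

/-- Column-sum condition is preserved under sign-coherent composite mutation (one-step
case): let `B` be an `n×n` skew-symmetrizable matrix and `C` an `m×m` matrix with blocks
`E_i = π⁻¹(i)` such that each diagonal block of `C` is zero, every column sum of the
`E_i × E_j` block of `C` equals `b_ij`, and each block is sign-coherent with `b_ij`.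
Then every column sum of the `E_i × E_j` block of the composite mutation `μ̂_k(C)` equals
the `(i,j)` entry of `μ_k(B)`. -/
theorem column_sums_preserved {n m : ℕ}
    (B : Matrix (Fin n) (Fin n) ℤ) (C : Matrix (Fin m) (Fin m) ℤ)
    (π : Fin m → Fin n)
    (D : Fin n → ℤ) (hD : ∀ i, 0 < D i)
    (hskew : ∀ i j, B i j * D j = -(B j i * D i))
    (hdiag : ∀ a b, π a = π b → C a b = 0)
    (hsum : ∀ (i : Fin n) (b : Fin m),
      ∑ a ∈ Finset.univ.filter (fun a => π a = i), C a b = B i (π b))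
    (hpos : ∀ a b, 0 ≤ B (π a) (π b) → 0 ≤ C a b)
    (hneg : ∀ a b, B (π a) (π b) ≤ 0 → C a b ≤ 0)
    (k : Fin n) :
    ∀ (i : Fin n) (b : Fin m),
      ∑ a ∈ Finset.univ.filter (fun a => π a = i), (compMut π C k) a b
        = (mutate B k) i (π b) := by
  classical
  intro i b
  set sk : Finset (Fin m) := Finset.univ.filter (fun a => π a = k) with hsk
  set L : List (Fin m) := sk.sort (· ≤ ·) with hL
  have hmem : ∀ a : Fin m, a ∈ L ↔ π a = k := by
    intro a; simp [hL, hsk, Finset.mem_sort]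
  have hform := foldl_mutate_formula π k L (Finset.sort_nodup _ _)
    (fun r hr => (hmem r).1 hr) C (fun a b ha hb => hdiag a b (ha.trans hb.symm))
  have hcomp : ∀ a b', compMut π C k a b' =
      if π a = k then (if π b' = k then 0 else if a ∈ L then -C a b' else C a b')
      else if π b' = k then (if b' ∈ L then -C a b' else C a b')
      else C a b' + (L.map (fun r => (|C a r| * C r b' + C a r * |C r b'|) / 2)).sum :=
    fun a b' => hform a b'
  by_cases hik : i = k
  · by_cases hbk : π b = k
    · -- sum is 0; RHS is -B i (π b) with B i (π b) = 0
      have hB0 : B i (π b) = 0 := by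
        rw [← hsum i b]
        apply Finset.sum_eq_zero
        intro a ha
        exact hdiag a b (((Finset.mem_filter.mp ha).2.trans hik).trans hbk.symm)
      have hLHS : ∀ a ∈ Finset.univ.filter (fun a => π a = i), compMut π C k a b = 0 := by
        intro a ha
        have hai : π a = k := (Finset.mem_filter.mp ha).2.trans hik
        rw [hcomp a b]
        simp [hai, hbk]
      rw [Finset.sum_congr rfl hLHS, Finset.sum_const_zero]
      have hB0' : B k (π b) = 0 := hik ▸ hB0
      simp [mutate, hik, hB0']
    · have hLHS : ∀ a ∈ Finset.univ.filter (fun a => π a = i), compMut π C k a b = -C a b := by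
        intro a ha
        have hai : π a = k := (Finset.mem_filter.mp ha).2.trans hik
        have haL : a ∈ L := (hmem a).2 hai
        rw [hcomp a b]
        simp [hai, hbk, haL]
      rw [Finset.sum_congr rfl hLHS, Finset.sum_neg_distrib, hsum i b]
      simp [mutate, hik]
  · by_cases hbk : π b = k
    · have hLHS : ∀ a ∈ Finset.univ.filter (fun a => π a = i), compMut π C k a b = -C a b := by
        intro a ha
        have hai : π a = i := (Finset.mem_filter.mp ha).2
        have hbL : b ∈ L := (hmem b).2 hbk
        rw [hcomp a b]
        simp [hai, hbk, hbL, hik]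
      rw [Finset.sum_congr rfl hLHS, Finset.sum_neg_distrib, hsum i b]
      simp [mutate, hbk]
    · -- main case
      have hLHS : ∀ a ∈ Finset.univ.filter (fun a => π a = i), compMut π C k a b
          = C a b + ∑ r ∈ sk, (|C a r| * C r b + C a r * |C r b|) / 2 := by
        intro a ha
        have hai : π a = i := (Finset.mem_filter.mp ha).2
        have hak : ¬ π a = k := by rw [hai]; exact hik
        rw [hcomp a b]
        simp only [hak, hbk, if_false]
        rw [sum_sort sk (fun r => (|C a r| * C r b + C a r * |C r b|) / 2)]
      rw [Finset.sum_congr rfl hLHS, Finset.sum_add_distrib, hsum i b]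
      have hRHS : mutate B k i (π b)
          = B i (π b) + (|B i k| * B k (π b) + B i k * |B k (π b)|) / 2 := by
        simp [mutate, hik, hbk]
      rw [hRHS]
      congr 1
      -- reduce to double-sum identity
      have hCar : ∀ a ∈ Finset.univ.filter (fun a => π a = i), ∀ r ∈ sk,
          B (π a) (π r) = B i k := by
        intro a ha r hr
        rw [(Finset.mem_filter.mp ha).2, (Finset.mem_filter.mp hr).2]
      have hCrb : ∀ r ∈ sk, B (π r) (π b) = B k (π b) := by
        intro r hr; rw [(Finset.mem_filter.mp hr).2]
      rcases le_total 0 (B i k) with h1 | h1 <;> rcases le_total 0 (B k (π b)) with h2 | h2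
      · -- ++ : each term = C a r * C r b
        have step : ∀ a ∈ Finset.univ.filter (fun a => π a = i), ∀ r ∈ sk,
            (|C a r| * C r b + C a r * |C r b|) / 2 = C a r * C r b := by
          intro a ha r hr
          exact half_pp _ _ (hpos a r (by rw [hCar a ha r hr]; exact h1))
            (hpos r b (by rw [hCrb r hr]; exact h2))
        calc ∑ a ∈ Finset.univ.filter (fun a => π a = i),
              ∑ r ∈ sk, (|C a r| * C r b + C a r * |C r b|) / 2
            = ∑ a ∈ Finset.univ.filter (fun a => π a = i), ∑ r ∈ sk, C a r * C r b := by
              refine Finset.sum_congr rfl fun a ha => Finset.sum_congr rfl fun r hr => step a ha r hr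
          _ = ∑ r ∈ sk, ∑ a ∈ Finset.univ.filter (fun a => π a = i), C a r * C r b :=
              Finset.sum_comm
          _ = ∑ r ∈ sk, B i k * C r b := by
              refine Finset.sum_congr rfl fun r hr => ?_
              rw [← Finset.sum_mul, hsum i r, (Finset.mem_filter.mp hr).2]
          _ = B i k * B k (π b) := by rw [← Finset.mul_sum, hsum k b]
          _ = (|B i k| * B k (π b) + B i k * |B k (π b)|) / 2 := (half_pp _ _ h1 h2).symm
      · -- +- : each term = 0
        have step : ∀ a ∈ Finset.univ.filter (fun a => π a = i), ∀ r ∈ sk,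
            (|C a r| * C r b + C a r * |C r b|) / 2 = 0 := by
          intro a ha r hr
          exact half_pn _ _ (hpos a r (by rw [hCar a ha r hr]; exact h1))
            (hneg r b (by rw [hCrb r hr]; exact h2))
        rw [half_pn _ _ h1 h2]
        refine Finset.sum_eq_zero fun a ha => Finset.sum_eq_zero fun r hr => step a ha r hr
      · -- -+ : each term = 0
        have step : ∀ a ∈ Finset.univ.filter (fun a => π a = i), ∀ r ∈ sk,
            (|C a r| * C r b + C a r * |C r b|) / 2 = 0 := by
          intro a ha r hr
          exact half_np _ _ (hneg a r (by rw [hCar a ha r hr]; exact h1))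
            (hpos r b (by rw [hCrb r hr]; exact h2))
        rw [half_np _ _ h1 h2]
        refine Finset.sum_eq_zero fun a ha => Finset.sum_eq_zero fun r hr => step a ha r hr
      · -- -- : each term = -(C a r * C r b)
        have step : ∀ a ∈ Finset.univ.filter (fun a => π a = i), ∀ r ∈ sk,
            (|C a r| * C r b + C a r * |C r b|) / 2 = -(C a r * C r b) := by
          intro a ha r hr
          exact half_nn _ _ (hneg a r (by rw [hCar a ha r hr]; exact h1))
            (hneg r b (by rw [hCrb r hr]; exact h2))
        calc ∑ a ∈ Finset.univ.filter (fun a => π a = i),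
              ∑ r ∈ sk, (|C a r| * C r b + C a r * |C r b|) / 2
            = ∑ a ∈ Finset.univ.filter (fun a => π a = i), ∑ r ∈ sk, -(C a r * C r b) := by
              refine Finset.sum_congr rfl fun a ha => Finset.sum_congr rfl fun r hr => step a ha r hr
          _ = -∑ r ∈ sk, ∑ a ∈ Finset.univ.filter (fun a => π a = i), C a r * C r b := by
              simp only [Finset.sum_neg_distrib]
              exact congrArg Neg.neg Finset.sum_comm
          _ = -∑ r ∈ sk, B i k * C r b := by
              refine congrArg Neg.neg (Finset.sum_congr rfl fun r hr => ?_)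
              rw [← Finset.sum_mul, hsum i r, (Finset.mem_filter.mp hr).2]
          _ = -(B i k * B k (π b)) := by rw [← Finset.mul_sum, hsum k b]
          _ = (|B i k| * B k (π b) + B i k * |B k (π b)|) / 2 := (half_nn _ _ h1 h2).symm
end
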